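/- There exists a constant C such that for all N ≥ 1, the number of integers n with 1 ≤ n ≤ N for which the ternary (base-3) expansion of 2^n omits the digit 2 is at most C · N^{log 2 / log 3}. -/

import Mathlib

lemma aux2 : ∀ d : ℕ, (d % 2 = 0 ∧ 2^d % 3 = 1) ∨ (d % 2 = 1 ∧ 2^d % 3 = 2) := by
  intro d
  induction d with
  | zero => simp
  | succ d ih =>
    rcases ih with ⟨h1, h2⟩ | ⟨h1, h2⟩ <;> rw [pow_succ, Nat.mul_mod, h2] <;> omega

lemma aux9 : ∀ k : ℕ, (k % 3 = 0 ∧ 4^k % 9 = 1) ∨ (k % 3 = 1 ∧ 4^k % 9 = 4) ∨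
    (k % 3 = 2 ∧ 4^k % 9 = 7) := by
  intro k
  induction k with
  | zero => simp
  | succ k ih =>
    rcases ih with ⟨h1, h2⟩ | ⟨h1, h2⟩ | ⟨h1, h2⟩ <;> rw [pow_succ, Nat.mul_mod, h2] <;> omega

lemma fac3 (a : ℕ) (h : 1 ≤ a) : a^3 - 1 = (a - 1) * (a * a + a + 1) := by
  obtain ⟨b, rfl⟩ : ∃ b, a = b + 1 := ⟨a - 1, by omega⟩
  have h2 : (b+1)^3 = b * ((b+1) * (b+1) + (b+1) + 1) + 1 := by ring
  simp [h2]

lemma E9 (a : ℕ) (h : a % 9 = 1 ∨ a % 9 = 4 ∨ a % 9 = 7) : (a * a + a + 1) % 9 = 3 := by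
  have h' : a * a % 9 = (a % 9) * (a % 9) % 9 := Nat.mul_mod a a 9
  rcases h with h | h | h <;> rw [h] at h' <;> omega

lemma lte : ∀ j k : ℕ, 3^(j+1) ∣ 4^k - 1 → 3^j ∣ k := by
  intro j
  induction j with
  | zero => intro k _; exact one_dvd k
  | succ j ih =>
    intro k h
    have h4 : (1:ℕ) ≤ 4^k := Nat.one_le_pow _ _ (by norm_num)
    have h9 : (9:ℕ) ∣ 4^k - 1 := by
      refine dvd_trans ?_ h
      have h92 : (9:ℕ) = 3^2 := by norm_num
      rw [h92]
      exact pow_dvd_pow 3 (by omega)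
    have hk9 : 4^k % 9 = 1 := by
      omega
    have hk3 : k % 3 = 0 := by rcases aux9 k with ⟨h1, h2⟩|⟨h1, h2⟩|⟨h1, h2⟩ <;> omega
    obtain ⟨m, rfl⟩ : ∃ m, k = 3 * m := ⟨k / 3, by omega⟩
    have ha1 : 1 ≤ 4^m := Nat.one_le_pow _ _ (by norm_num)
    have hfac : 4^(3*m) - 1 = (4^m - 1) * (4^m * 4^m + 4^m + 1) := by
      have h1 : 4^(3*m) = (4^m)^3 := by rw [← pow_mul]; ring_nf
      rw [h1]; exact fac3 _ ha1
    have hE9 : (4^m * 4^m + 4^m + 1) % 9 = 3 := by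
      apply E9
      rcases aux9 m with ⟨h1, h2⟩|⟨h1, h2⟩|⟨h1, h2⟩ <;> omega
    obtain ⟨t, ht⟩ : ∃ t, 4^m * 4^m + 4^m + 1 = 3 * (3 * t + 1) :=
      ⟨(4^m * 4^m + 4^m + 1)/9, by omega⟩
    rw [hfac, ht] at h
    have hcop : Nat.Coprime (3^(j+2)) (3 * t + 1) := by
      apply Nat.Coprime.pow_left
      refine (Nat.Prime.coprime_iff_not_dvd Nat.prime_three).mpr ?_
      omega
    have h' : 3^(j+2) ∣ (4^m - 1) * 3 := by
      refine hcop.dvd_of_dvd_mul_right ?_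
      calc 3^(j+2) ∣ (4^m - 1) * (3 * (3*t+1)) := h
        _ = (4^m - 1) * 3 * (3*t+1) := by ring
    have h'' : 3^(j+1) ∣ 4^m - 1 := by
      have hh : 3^(j+1) * 3 ∣ (4^m - 1) * 3 := by rw [← pow_succ]; exact h'
      exact (Nat.mul_dvd_mul_iff_right (by norm_num : 0 < 3)).mp hh
    have := ih m h''
    calc 3^(j+1) = 3 * 3^j := by ring
      _ ∣ 3 * m := mul_dvd_mul_left 3 this



lemma ord23 (j d : ℕ) (h : 3^(j+1) ∣ 2^d - 1) : 2 * 3^j ∣ d := by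
  rcases Nat.eq_zero_or_pos d with rfl | hd
  · simp
  have h2 : (1:ℕ) ≤ 2^d := Nat.one_le_pow _ _ (by norm_num)
  have h3 : (3:ℕ) ∣ 2^d - 1 := dvd_trans (dvd_pow_self 3 (Nat.succ_ne_zero j)) h
  have hm : 2^d % 3 = 1 := by omega
  have hev : d % 2 = 0 := by rcases aux2 d with ⟨h1, _⟩ | ⟨_, h2'⟩ <;> omega
  obtain ⟨e, rfl⟩ : ∃ e, d = 2 * e := ⟨d / 2, by omega⟩
  have h4 : (2:ℕ)^(2*e) = 4^e := by rw [pow_mul]; norm_num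
  rw [h4] at h
  exact mul_dvd_mul_left 2 (lte j e h)

lemma digitA : ∀ (i m : ℕ), m / 3^i % 3 = 2 → 2 ∈ Nat.digits 3 m := by
  intro i
  induction i with
  | zero =>
    intro m h
    simp only [pow_zero, Nat.div_one] at h
    have hm : 0 < m := by omega
    rw [Nat.digits_def' (by norm_num : 1 < 3) hm]
    rw [h]
    exact List.mem_cons_self
  | succ i ih =>
    intro m h
    have h' : (m / 3) / 3^i % 3 = 2 := by
      rw [Nat.div_div_eq_div_mul, ← pow_succ']
      exact h
    have hmem := ih (m/3) h'
    have hm : 0 < m := by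
      rcases Nat.eq_zero_or_pos m with rfl | hm
      · simp at hmem
      · exact hm
    rw [Nat.digits_def' (by norm_num : 1 < 3) hm]
    exact List.mem_cons_of_mem _ hmem

lemma digitsB : ∀ (j r s : ℕ), r < 3^j → s < 3^j →
    (∀ i, i < j → r / 3^i % 3 = s / 3^i % 3) → r = s := by
  intro j
  induction j with
  | zero => intro r s hr hs _; simp at hr hs; omega
  | succ j ih =>
    intro r s hr hs h
    have h0 := h 0 (by omega)
    simp only [pow_zero, Nat.div_one] at h0
    have hr' : r / 3 < 3^j := by
      rw [Nat.div_lt_iff_lt_mul (by norm_num)]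
      calc r < 3^(j+1) := hr
        _ = 3^j * 3 := by rw [pow_succ]
    have hs' : s / 3 < 3^j := by
      rw [Nat.div_lt_iff_lt_mul (by norm_num)]
      calc s < 3^(j+1) := hs
        _ = 3^j * 3 := by rw [pow_succ]
    have hd : ∀ i, i < j → (r/3) / 3^i % 3 = (s/3) / 3^i % 3 := by
      intro i hi
      rw [Nat.div_div_eq_div_mul, Nat.div_div_eq_div_mul, ← pow_succ']
      exact h (i+1) (by omega)
    have := ih (r/3) (s/3) hr' hs' hd
    omega



lemma cardT (j : ℕ) :
    ((Finset.range (3^j)).filter (fun r => ∀ i < j, r / 3^i % 3 ≠ 2)).card ≤ 2^j := by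
  classical
  have := Finset.card_le_card_of_injOn
    (f := fun r => (fun i : Fin j => decide (r / 3^(i:ℕ) % 3 = 1)))
    (s := (Finset.range (3^j)).filter (fun r => ∀ i < j, r / 3^i % 3 ≠ 2))
    (t := (Finset.univ : Finset (Fin j → Bool)))
    (fun a _ => Finset.mem_univ _) ?_
  · calc _ ≤ (Finset.univ : Finset (Fin j → Bool)).card := this
      _ = 2^j := by simp
  · intro r hr s hs hfg
    simp only [Finset.coe_filter, Set.mem_setOf_eq, Finset.mem_range] at hr hs
    apply digitsB j r s hr.1 hs.1
    intro i hi
    have := congrFun hfg ⟨i, hi⟩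
    simp only [decide_eq_decide] at this
    have h1 : r / 3^i % 3 < 3 := Nat.mod_lt _ (by norm_num)
    have h2 : s / 3^i % 3 < 3 := Nat.mod_lt _ (by norm_num)
    have h3 := hr.2 i hi
    have h4 := hs.2 i hi
    rcases this with ⟨hmp, hmpr⟩
    by_cases hcase : r / 3^i % 3 = 1
    · rw [hcase, hmp hcase]
    · have : s / 3^i % 3 ≠ 1 := fun hh => hcase (hmpr hh)
      omega



theorem narkiewicz_bound :
    ∃ C : ℝ, ∀ N : ℕ, 1 ≤ N →
      (((Finset.Icc 1 N).filter
          (fun n => 2 ∉ Nat.digits 3 (2 ^ n))).card : ℝ) ≤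
        C * (N : ℝ) ^ (Real.log 2 / Real.log 3) := by
  classical
  refine ⟨4, fun N hN => ?_⟩
  set L := Nat.log 3 N with hL
  set j := L + 1 with hj
  have hPN : 3^L ≤ N := Nat.pow_log_le_self 3 (by omega)
  have hN3 : N < 3^j := Nat.lt_pow_succ_log_self (by norm_num) N
  have hLpos : (1:ℕ) ≤ 3^L := Nat.one_le_pow _ _ (by norm_num)
  set S := (Finset.Icc 1 N).filter (fun n => 2 ∉ Nat.digits 3 (2^n)) with hS
  set T := (Finset.range (3^j)).filter (fun r => ∀ i < j, r / 3^i % 3 ≠ 2) with hT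
  have hmaps : ∀ n ∈ S, 2^n % 3^j ∈ T := by
    intro n hn
    rw [hS, Finset.mem_filter] at hn
    rw [hT, Finset.mem_filter]
    refine ⟨Finset.mem_range.mpr (Nat.mod_lt _ (pow_pos (by norm_num) j)), ?_⟩
    intro i hi h2
    apply hn.2
    apply digitA i
    have key : (2^n % 3^j) / 3^i % 3 = 2^n / 3^i % 3 := by
      have h1 : (3:ℕ)^j = 3^i * 3^(j - i) := by rw [← pow_add]; congr 1; omega
      rw [h1, Nat.mod_mul_right_div_self]
      exact Nat.mod_mod_of_dvd _ (dvd_pow_self 3 (by omega))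
    rw [key] at h2
    exact h2
  have hfiber : ∀ r ∈ T, (S.filter (fun n => 2^n % 3^j = r)).card ≤ 2 := by
    intro r _
    set F := S.filter (fun n => 2^n % 3^j = r) with hF
    rcases Finset.eq_empty_or_nonempty F with he | hne
    · simp [he]
    · set n₀ := F.min' hne with hn0
      have hmem0 : n₀ ∈ F := F.min'_mem hne
      have hr0 : 2^n₀ % 3^j = r := (Finset.mem_filter.mp hmem0).2
      have hIcc0 : n₀ ∈ Finset.Icc 1 N :=
        (Finset.mem_filter.mp (Finset.mem_filter.mp hmem0).1).1
      have hsub : F ⊆ {n₀, n₀ + 2 * 3^L} := by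
        intro n hn
        have hle : n₀ ≤ n := F.min'_le n hn
        have hrn : 2^n % 3^j = r := (Finset.mem_filter.mp hn).2
        have hIccn : n ∈ Finset.Icc 1 N :=
          (Finset.mem_filter.mp (Finset.mem_filter.mp hn).1).1
        rw [Finset.mem_Icc] at hIcc0 hIccn
        set d := n - n₀ with hd
        have hpowle : (2:ℕ)^n₀ ≤ 2^n := Nat.pow_le_pow_right (by norm_num) hle
        have hmodeq : (2:ℕ)^n₀ ≡ 2^n [MOD 3^j] := by
          unfold Nat.ModEq; rw [hr0, hrn]
        have hdvd : 3^j ∣ 2^n - 2^n₀ := (Nat.modEq_iff_dvd' hpowle).mp hmodeq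
        have h1 : (1:ℕ) ≤ 2^d := Nat.one_le_pow _ _ (by norm_num)
        have hfact : 2^n - 2^n₀ = 2^n₀ * (2^d - 1) := by
          have hnd : n = n₀ + d := by omega
          obtain ⟨e, he⟩ : ∃ e, 2^d = e + 1 := ⟨2^d - 1, by omega⟩
          rw [hnd, pow_add, he, Nat.add_sub_cancel, mul_add, mul_one, Nat.add_sub_cancel]
        rw [hfact] at hdvd
        have hcop : Nat.Coprime (3^j) (2^n₀) :=
          Nat.Coprime.pow _ _ (by norm_num)
        have hdvd1 : 3^j ∣ 2^d - 1 := hcop.dvd_of_dvd_mul_left hdvd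
        have hdvd2 : 2 * 3^L ∣ d := ord23 L d hdvd1
        obtain ⟨q, hq⟩ := hdvd2
        have hdlt : d < 3 * 3^L := by
          have : (3:ℕ)^j = 3 * 3^L := by rw [hj, pow_succ]; ring
          omega
        have hq1 : q ≤ 1 := by
          by_contra hq2
          push_neg at hq2
          have h22 : 2 * 3^L * 2 ≤ 2 * 3^L * q := Nat.mul_le_mul_left _ hq2
          omega
        interval_cases q
        · simp only [Finset.mem_insert, Finset.mem_singleton]
          left; omega
        · simp only [Finset.mem_insert, Finset.mem_singleton]
          right; omega
      calc F.card ≤ ({n₀, n₀ + 2 * 3^L} : Finset ℕ).card := Finset.card_le_card hsub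
        _ ≤ 2 := by
          refine le_trans (Finset.card_insert_le _ _) ?_
          simp
  have hcard : S.card ≤ 4 * 2^L := by
    calc S.card ≤ 2 * T.card :=
          Finset.card_le_mul_card_image_of_maps_to hmaps 2 hfiber
      _ ≤ 2 * 2^j := by
          have hct := cardT j
          rw [← hT] at hct
          omega
      _ = 4 * 2^L := by rw [hj, pow_succ]; ring
  have he0 : (0:ℝ) ≤ Real.log 2 / Real.log 3 :=
    div_nonneg (Real.log_nonneg (by norm_num)) (Real.log_nonneg (by norm_num))
  have h32 : (3:ℝ) ^ (Real.log 2 / Real.log 3) = 2 := by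
    have hlogb : Real.log 2 / Real.log 3 = Real.logb 3 2 := rfl
    rw [hlogb]
    exact Real.rpow_logb (by norm_num) (by norm_num) (by norm_num)
  have key : (2:ℝ)^L ≤ (N:ℝ) ^ (Real.log 2 / Real.log 3) := by
    have hA : ((3:ℝ) ^ (Real.log 2 / Real.log 3))^(L:ℕ)
        = ((3:ℝ)^(L:ℕ)) ^ (Real.log 2 / Real.log 3) := by
      rw [← Real.rpow_natCast ((3:ℝ) ^ (Real.log 2 / Real.log 3)) L,
        ← Real.rpow_mul (by norm_num), mul_comm, Real.rpow_mul (by norm_num),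
        Real.rpow_natCast]
    calc (2:ℝ)^L = ((3:ℝ) ^ (Real.log 2 / Real.log 3))^(L:ℕ) := by rw [h32]
      _ = ((3:ℝ)^(L:ℕ)) ^ (Real.log 2 / Real.log 3) := hA
      _ ≤ (N:ℝ) ^ (Real.log 2 / Real.log 3) := by
          apply Real.rpow_le_rpow (by positivity) ?_ he0
          exact_mod_cast hPN
  calc (S.card : ℝ) ≤ ((4 * 2^L : ℕ) : ℝ) := by exact_mod_cast hcard
    _ = 4 * (2:ℝ)^L := by push_cast; ring
    _ ≤ 4 * (N:ℝ) ^ (Real.log 2 / Real.log 3) := by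
        have := key
        nlinarith
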